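/- Let ε ∈ (0,1], k ∈ ℕ, K = 2^{⌈log₂(k+1)⌉}, W the Hadamard Response channel from [k] to [K] with parameter ε, and α_H = (e^ε−1)/(e^ε+1). For a probability distribution p on [k]×[k], define T(p) on [K]×[K] by T(p)(z₁,z₂) = Σ_{x₁,x₂∈[k]} W(z₁|x₁) W(z₂|x₂) p(x₁,x₂). Then for any two distributions p, q on [k]×[k] with respective marginals p₁, p₂ and q₁, q₂, one has ‖T(p) − T(q)‖₂² = (α_H⁴/K²)‖p − q‖₂² + (α_H²/K²)(‖p₁ − q₁‖₂² + ‖p₂ − q₂‖₂²). In particular, if TV(p,q) > γ then ‖T(p) − T(q)‖₂ > 2 α_H² γ/(K k). -/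

import Mathlib

open Finset

/-- Entry of the Sylvester Hadamard matrix of order `2^t`, at row `a`, column `b`
(indices in `{0, …, 2^t − 1}`): `(−1)^{⟨a,b⟩}` where `⟨a,b⟩` is the inner product
mod 2 of the binary representations of `a` and `b`. -/
def hadSign (t a b : ℕ) : ℤ :=
  if (∑ r ∈ Finset.range t, if a.testBit r ∧ b.testBit r then 1 else 0) % 2 = 0 then 1
  else -1

/-- Output alphabet size for Hadamard Response: `K = 2^{⌈log₂(k+1)⌉}`. -/
def hrK (k : ℕ) : ℕ := 2 ^ Nat.clog 2 (k + 1)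

noncomputable def alphaH (ε : ℝ) : ℝ := (Real.exp ε - 1) / (Real.exp ε + 1)

/-- The Hadamard Response channel `W(z|x)`: with the set `C_x ⊆ [K]` encoded by the
`φ(x)`-th row of the Hadamard matrix (`z ∈ C_x` iff the `(φ(x), z)` entry is `+1`),
`W(z|x) = (2/K)·e^ε/(e^ε+1)` for `z ∈ C_x` and `(2/K)·1/(e^ε+1)` otherwise. -/
noncomputable def hrW (ε : ℝ) {k : ℕ} (φ : Fin k → Fin (hrK k)) (x : Fin k)
    (z : Fin (hrK k)) : ℝ :=
  if hadSign (Nat.clog 2 (k + 1)) (φ x).val z.val = 1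
    then (2 / (hrK k : ℝ)) * (Real.exp ε / (Real.exp ε + 1))
    else (2 / (hrK k : ℝ)) * (1 / (Real.exp ε + 1))

/-- `T(p)`, the output distribution on `[K]×[K]` obtained by applying Hadamard
Response independently to both coordinates of a sample from `p ∈ Δ([k]×[k])`. -/
noncomputable def hrT (ε : ℝ) {k : ℕ} (φ : Fin k → Fin (hrK k))
    (p : Fin k → Fin k → ℝ) (z₁ z₂ : Fin (hrK k)) : ℝ :=
  ∑ x₁, ∑ x₂, hrW ε φ x₁ z₁ * hrW ε φ x₂ z₂ * p x₁ x₂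

lemma hadSign_eq_pow (t a b : ℕ) :
    hadSign t a b = (-1 : ℤ) ^ (∑ r ∈ Finset.range t, if a.testBit r ∧ b.testBit r then 1 else 0) := by
  unfold hadSign
  rcases Nat.even_or_odd (∑ r ∈ Finset.range t, if a.testBit r ∧ b.testBit r then 1 else 0) with h | h
  · rw [if_pos (Nat.even_iff.mp h), h.neg_one_pow]
  · rw [if_neg (by rw [Nat.odd_iff.mp h]; norm_num), h.neg_one_pow]

lemma hadSign_mul (t a b z : ℕ) :
    hadSign t a z * hadSign t b z = hadSign t (a ^^^ b) z := by
  rw [hadSign_eq_pow, hadSign_eq_pow, hadSign_eq_pow, ← pow_add]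
  induction t with
  | zero => simp
  | succ n ih =>
      rw [Finset.sum_range_succ, Finset.sum_range_succ, Finset.sum_range_succ,
        add_add_add_comm, pow_add, ih, pow_add]
      congr 1
      rcases ha : a.testBit n <;> rcases hb : b.testBit n <;> rcases hz : z.testBit n <;>
        simp [Nat.testBit_xor, ha, hb, hz, pow_succ]

lemma hadSign_row_sum (t a : ℕ) (ha : a < 2 ^ t) :
    ∑ z ∈ Finset.range (2 ^ t), hadSign t a z = if a = 0 then (2 ^ t : ℤ) else 0 := by
  induction t generalizing a with
  | zero =>
      interval_cases a
      simp [hadSign]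
  | succ n ih =>
      have h2 : 2 ^ (n + 1) = 2 ^ n + 2 ^ n := by ring
      rw [h2, Finset.sum_range_add]
      have hlow : ∀ z ∈ Finset.range (2 ^ n), hadSign (n+1) a z = hadSign n a z := by
        intro z hz
        simp only [Finset.mem_range] at hz
        rw [hadSign_eq_pow, hadSign_eq_pow, Finset.sum_range_succ,
          Nat.testBit_lt_two_pow hz]
        simp
      have hhigh : ∀ z ∈ Finset.range (2 ^ n),
          hadSign (n+1) a (2 ^ n + z) = (if a.testBit n then -1 else 1) * hadSign n a z := by
        intro z hz
        simp only [Finset.mem_range] at hz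
        rw [hadSign_eq_pow, hadSign_eq_pow, Finset.sum_range_succ]
        have hb : ∀ r < n, (2 ^ n + z).testBit r = z.testBit r := by
          intro r hr; exact Nat.testBit_two_pow_add_gt hr z
        have hbn : (2 ^ n + z).testBit n = true := by
          rw [Nat.testBit_two_pow_add_eq, Nat.testBit_lt_two_pow hz]; rfl
        rw [Finset.sum_congr rfl (fun r hr => by
          rw [hb r (Finset.mem_range.mp hr)])]
        rcases han : a.testBit n <;> simp [hbn, pow_add, mul_comm]
      rw [Finset.sum_congr rfl hlow, Finset.sum_congr rfl hhigh, ← Finset.mul_sum]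
      rcases han : a.testBit n with _ | _
      · have ha' : a < 2 ^ n := by
          refine Nat.lt_pow_two_of_testBit a fun i hi => ?_
          rcases Nat.eq_or_lt_of_le hi with rfl | hlt
          · exact han
          · exact Nat.testBit_lt_two_pow (lt_of_lt_of_le ha (Nat.pow_le_pow_right (by norm_num) hlt))
        rw [ih a ha']
        split <;> push_cast <;> ring
      · have ha0 : a ≠ 0 := by
          intro h; rw [h] at han; simp at han
        rw [if_neg ha0]
        simp

lemma hadSign_orthog (t a b : ℕ) (ha : a < 2 ^ t) (hb : b < 2 ^ t) :
    ∑ z ∈ Finset.range (2 ^ t), hadSign t a z * hadSign t b z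
      = if a = b then (2 ^ t : ℤ) else 0 := by
  have hxor : a ^^^ b < 2 ^ t := by
    refine Nat.lt_pow_two_of_testBit _ fun i hi => ?_
    have h1 : a.testBit i = false :=
      Nat.testBit_lt_two_pow (lt_of_lt_of_le ha (Nat.pow_le_pow_right (by norm_num) hi))
    have h2 : b.testBit i = false :=
      Nat.testBit_lt_two_pow (lt_of_lt_of_le hb (Nat.pow_le_pow_right (by norm_num) hi))
    simp [Nat.testBit_xor, h1, h2]
  simp_rw [hadSign_mul]
  rw [hadSign_row_sum t (a ^^^ b) hxor]
  simp [xor_eq_zero_iff]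

lemma hadSign_eq_one_or (t a b : ℕ) : hadSign t a b = 1 ∨ hadSign t a b = -1 := by
  unfold hadSign; split <;> simp

lemma hrW_eq (ε : ℝ) {k : ℕ} (φ : Fin k → Fin (hrK k)) (x : Fin k) (z : Fin (hrK k)) :
    hrW ε φ x z
      = (1 + alphaH ε * ((hadSign (Nat.clog 2 (k + 1)) (φ x).val z.val : ℤ) : ℝ)) / (hrK k : ℝ) := by
  have he : Real.exp ε + 1 ≠ 0 := by positivity
  rcases hadSign_eq_one_or (Nat.clog 2 (k + 1)) (φ x).val z.val with h | h <;>
    rw [hrW, h] <;> simp only [if_true, if_neg (by norm_num : (-1 : ℤ) ≠ 1)] <;>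
    push_cast <;> rw [alphaH] <;> field_simp <;> first | ring | (left; ring)

lemma hrW_inner (ε : ℝ) {k : ℕ} (φ : Fin k → Fin (hrK k))
    (hφ : Function.Injective φ) (hφ0 : ∀ x, (φ x).val ≠ 0) (x y : Fin k) :
    ∑ z : Fin (hrK k), hrW ε φ x z * hrW ε φ y z
      = (1 + alphaH ε ^ 2 * (if x = y then 1 else 0)) / (hrK k : ℝ) := by
  have hKpos : 0 < hrK k := Nat.pow_pos (by norm_num)
  have hK : (hrK k : ℝ) ≠ 0 := by positivity
  set t := Nat.clog 2 (k + 1) with ht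
  have hKt : hrK k = 2 ^ t := rfl
  have hlt : ∀ u : Fin k, (φ u).val < 2 ^ t := fun u => hKt ▸ (φ u).isLt
  -- row sums vanish
  have hrow : ∀ u : Fin k,
      ∑ z : Fin (hrK k), ((hadSign t (φ u).val z.val : ℤ) : ℝ) = 0 := by
    intro u
    rw [← Int.cast_sum]
    have : ∑ z : Fin (hrK k), hadSign t (φ u).val z.val
        = ∑ z ∈ Finset.range (2 ^ t), hadSign t (φ u).val z := by
      rw [← hKt, ← Fin.sum_univ_eq_sum_range]
    rw [this, hadSign_row_sum t _ (hlt u), if_neg (hφ0 u)]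
    simp
  have horth : ∑ z : Fin (hrK k),
      ((hadSign t (φ x).val z.val : ℤ) : ℝ) * ((hadSign t (φ y).val z.val : ℤ) : ℝ)
      = if x = y then (hrK k : ℝ) else 0 := by
    have : ∑ z : Fin (hrK k), hadSign t (φ x).val z.val * hadSign t (φ y).val z.val
        = ∑ z ∈ Finset.range (2 ^ t), hadSign t (φ x).val z * hadSign t (φ y).val z := by
      rw [← hKt, ← Fin.sum_univ_eq_sum_range]
    simp_rw [← Int.cast_mul]
    rw [← Int.cast_sum, this, hadSign_orthog t _ _ (hlt x) (hlt y)]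
    have hval : (φ x).val = (φ y).val ↔ x = y := by
      constructor
      · intro h; exact hφ (Fin.val_injective h)
      · rintro rfl; rfl
    by_cases hxy : x = y
    · rw [if_pos (hval.mpr hxy), if_pos hxy, hKt]; push_cast; ring
    · rw [if_neg (fun h => hxy (hval.mp h)), if_neg hxy]; simp
  simp_rw [hrW_eq]
  have expand : ∀ z : Fin (hrK k),
      (1 + alphaH ε * ((hadSign t (φ x).val z.val : ℤ) : ℝ)) / (hrK k : ℝ)
        * ((1 + alphaH ε * ((hadSign t (φ y).val z.val : ℤ) : ℝ)) / (hrK k : ℝ))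
      = (1 + alphaH ε * ((hadSign t (φ x).val z.val : ℤ) : ℝ)
          + alphaH ε * ((hadSign t (φ y).val z.val : ℤ) : ℝ)
          + alphaH ε ^ 2 * (((hadSign t (φ x).val z.val : ℤ) : ℝ)
              * ((hadSign t (φ y).val z.val : ℤ) : ℝ))) / (hrK k : ℝ) ^ 2 := by
    intro z; field_simp; ring
  rw [Finset.sum_congr rfl fun z _ => expand z, ← Finset.sum_div,
    Finset.sum_add_distrib, Finset.sum_add_distrib, Finset.sum_add_distrib,
    ← Finset.mul_sum, ← Finset.mul_sum, ← Finset.mul_sum, hrow, hrow, horth,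
    Finset.sum_const, Finset.card_univ]
  simp only [Fintype.card_fin, nsmul_eq_mul, mul_one, mul_zero, add_zero]
  by_cases hxy : x = y <;> simp only [hxy, if_true, if_false, if_neg] <;> field_simp <;> first | ring | (left; ring)

section
variable {k : ℕ}


lemma sumhelp (K : ℕ) (A B : Fin K → ℝ) (c : ℝ) :
    ∑ z₁ : Fin K, ∑ z₂ : Fin K, A z₁ * B z₂ * c = (∑ z₁, A z₁) * (∑ z₂, B z₂) * c := by
  rw [Finset.sum_mul_sum, Finset.sum_mul]
  refine Finset.sum_congr rfl fun z₁ _ => ?_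
  rw [Finset.sum_mul]

lemma delta1 (d : Fin k → Fin k → ℝ) :
    ∑ x : Fin k × Fin k, ∑ y : Fin k × Fin k,
      (if x.1 = y.1 then (1:ℝ) else 0) * (d x.1 x.2 * d y.1 y.2)
    = ∑ x₁, (∑ x₂, d x₁ x₂) ^ 2 := by
  simp only [Fintype.sum_prod_type, ite_mul, one_mul, zero_mul]
  refine Finset.sum_congr rfl fun x₁ _ => ?_
  have h : ∀ x₂, (∑ y₁, ∑ y₂, if x₁ = y₁ then d x₁ x₂ * d y₁ y₂ else 0)
      = d x₁ x₂ * ∑ y₂, d x₁ y₂ := by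
    intro x₂
    rw [Finset.sum_comm]
    simp only [Finset.sum_ite_eq, Finset.mem_univ, if_true]
    rw [← Finset.mul_sum]
  rw [Finset.sum_congr rfl fun x₂ _ => h x₂, ← Finset.sum_mul, pow_two]

lemma delta2 (d : Fin k → Fin k → ℝ) :
    ∑ x : Fin k × Fin k, ∑ y : Fin k × Fin k,
      (if x.2 = y.2 then (1:ℝ) else 0) * (d x.1 x.2 * d y.1 y.2)
    = ∑ x₂, (∑ x₁, d x₁ x₂) ^ 2 := by
  simp only [Fintype.sum_prod_type, ite_mul, one_mul, zero_mul]
  rw [Finset.sum_comm]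
  refine Finset.sum_congr rfl fun x₂ _ => ?_
  have h : ∀ x₁, (∑ y₁, ∑ y₂, if x₂ = y₂ then d x₁ x₂ * d y₁ y₂ else 0)
      = d x₁ x₂ * ∑ y₁, d y₁ x₂ := by
    intro x₁
    simp only [Finset.sum_ite_eq, Finset.mem_univ, if_true]
    rw [← Finset.mul_sum]
  rw [Finset.sum_congr rfl fun x₁ _ => h x₁, ← Finset.sum_mul, pow_two]

lemma delta12 (d : Fin k → Fin k → ℝ) :
    ∑ x : Fin k × Fin k, ∑ y : Fin k × Fin k,
      ((if x.1 = y.1 then (1:ℝ) else 0) * (if x.2 = y.2 then (1:ℝ) else 0)) * (d x.1 x.2 * d y.1 y.2)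
    = ∑ x₁, ∑ x₂, d x₁ x₂ ^ 2 := by
  simp only [Fintype.sum_prod_type, ite_mul, one_mul, zero_mul, mul_ite, mul_zero,
    Finset.sum_ite_eq, Finset.mem_univ, if_true]
  refine Finset.sum_congr rfl fun x₁ _ => Finset.sum_congr rfl fun x₂ _ => ?_
  rw [pow_two]

lemma delta0 (d : Fin k → Fin k → ℝ) :
    ∑ x : Fin k × Fin k, ∑ y : Fin k × Fin k, (d x.1 x.2 * d y.1 y.2)
    = (∑ x₁, ∑ x₂, d x₁ x₂) ^ 2 := by
  rw [← Finset.sum_mul_sum, Fintype.sum_prod_type, pow_two]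


end

lemma hr_main (ε : ℝ) {k : ℕ} (φ : Fin k → Fin (hrK k))
    (hφ : Function.Injective φ) (hφ0 : ∀ x, (φ x).val ≠ 0)
    (d : Fin k → Fin k → ℝ) :
    ∑ z₁ : Fin (hrK k), ∑ z₂ : Fin (hrK k),
      (∑ x₁, ∑ x₂, hrW ε φ x₁ z₁ * hrW ε φ x₂ z₂ * d x₁ x₂) ^ 2
    = ((∑ x₁, ∑ x₂, d x₁ x₂) ^ 2
        + alphaH ε ^ 2 * ((∑ x₁, (∑ x₂, d x₁ x₂) ^ 2) + (∑ x₂, (∑ x₁, d x₁ x₂) ^ 2))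
        + alphaH ε ^ 4 * (∑ x₁, ∑ x₂, d x₁ x₂ ^ 2)) / (hrK k : ℝ) ^ 2 := by
  have hKpos : (0:ℝ) < (hrK k : ℝ) := by
    have : 0 < hrK k := Nat.pow_pos (by norm_num)
    exact_mod_cast this
  have hK : (hrK k : ℝ) ≠ 0 := ne_of_gt hKpos
  set α := alphaH ε with hα
  -- Step 1: rewrite inner double sums over the product type and expand the square
  have step1 : ∀ z₁ z₂ : Fin (hrK k),
      (∑ x₁, ∑ x₂, hrW ε φ x₁ z₁ * hrW ε φ x₂ z₂ * d x₁ x₂) ^ 2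
      = ∑ x : Fin k × Fin k, ∑ y : Fin k × Fin k,
          (hrW ε φ x.1 z₁ * hrW ε φ x.2 z₂ * d x.1 x.2)
          * (hrW ε φ y.1 z₁ * hrW ε φ y.2 z₂ * d y.1 y.2) := by
    intro z₁ z₂
    rw [← Fintype.sum_prod_type (f := fun w : Fin k × Fin k =>
      hrW ε φ w.1 z₁ * hrW ε φ w.2 z₂ * d w.1 w.2), pow_two, Finset.sum_mul_sum]
  simp_rw [step1]
  -- Step 2: move the z-sums inside
  have h1 : ∀ z₁ : Fin (hrK k),
      (∑ z₂ : Fin (hrK k), ∑ x : Fin k × Fin k, ∑ y : Fin k × Fin k,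
        (hrW ε φ x.1 z₁ * hrW ε φ x.2 z₂ * d x.1 x.2)
          * (hrW ε φ y.1 z₁ * hrW ε φ y.2 z₂ * d y.1 y.2))
      = ∑ x : Fin k × Fin k, ∑ y : Fin k × Fin k, ∑ z₂ : Fin (hrK k),
        (hrW ε φ x.1 z₁ * hrW ε φ x.2 z₂ * d x.1 x.2)
          * (hrW ε φ y.1 z₁ * hrW ε φ y.2 z₂ * d y.1 y.2) := by
    intro z₁
    rw [Finset.sum_comm]
    exact Finset.sum_congr rfl fun x _ => Finset.sum_comm
  simp_rw [h1]
  rw [Finset.sum_comm]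
  rw [Finset.sum_congr rfl fun x (_ : x ∈ Finset.univ) => Finset.sum_comm]
  -- Step 3: evaluate the inner z-sums via hrW_inner
  have step3 : ∀ x y : Fin k × Fin k,
      (∑ z₁ : Fin (hrK k), ∑ z₂ : Fin (hrK k),
        (hrW ε φ x.1 z₁ * hrW ε φ x.2 z₂ * d x.1 x.2)
          * (hrW ε φ y.1 z₁ * hrW ε φ y.2 z₂ * d y.1 y.2))
      = ((d x.1 x.2 * d y.1 y.2)
          + α ^ 2 * ((if x.1 = y.1 then (1:ℝ) else 0) * (d x.1 x.2 * d y.1 y.2))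
          + α ^ 2 * ((if x.2 = y.2 then (1:ℝ) else 0) * (d x.1 x.2 * d y.1 y.2))
          + α ^ 4 * (((if x.1 = y.1 then (1:ℝ) else 0) * (if x.2 = y.2 then (1:ℝ) else 0))
              * (d x.1 x.2 * d y.1 y.2))) / (hrK k : ℝ) ^ 2 := by
    intro x y
    have e1 : ∀ z₁ z₂ : Fin (hrK k),
        (hrW ε φ x.1 z₁ * hrW ε φ x.2 z₂ * d x.1 x.2)
          * (hrW ε φ y.1 z₁ * hrW ε φ y.2 z₂ * d y.1 y.2)
        = (hrW ε φ x.1 z₁ * hrW ε φ y.1 z₁) * (hrW ε φ x.2 z₂ * hrW ε φ y.2 z₂)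
            * (d x.1 x.2 * d y.1 y.2) := fun z₁ z₂ => by ring
    simp_rw [e1]
    rw [sumhelp, hrW_inner ε φ hφ hφ0, hrW_inner ε φ hφ hφ0]
    have gen : ∀ i₁ i₂ : ℝ,
        (1 + α ^ 2 * i₁) / (hrK k : ℝ) * ((1 + α ^ 2 * i₂) / (hrK k : ℝ))
            * (d x.1 x.2 * d y.1 y.2)
          = ((d x.1 x.2 * d y.1 y.2) + α ^ 2 * (i₁ * (d x.1 x.2 * d y.1 y.2))
              + α ^ 2 * (i₂ * (d x.1 x.2 * d y.1 y.2))
              + α ^ 4 * ((i₁ * i₂) * (d x.1 x.2 * d y.1 y.2))) / (hrK k : ℝ) ^ 2 := by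
      intro i₁ i₂
      rw [div_mul_div_comm, div_mul_eq_mul_div]
      congr 1 <;> ring
    exact gen _ _
  simp_rw [step3]
  simp_rw [← Finset.sum_div]
  congr 1
  simp_rw [Finset.sum_add_distrib, ← Finset.mul_sum]
  rw [← Finset.sum_mul, delta1, delta2, delta12,
    Fintype.sum_prod_type (f := fun w : Fin k × Fin k => d w.1 w.2), ← pow_two]
  ring

/-- The bivariate Hadamard transform preserves `ℓ₂` distances:
`‖T(p) − T(q)‖₂² = (α_H⁴/K²)‖p − q‖₂² + (α_H²/K²)(‖p₁ − q₁‖₂² + ‖p₂ − q₂‖₂²)`,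
and in particular `‖T(p) − T(q)‖₂ > 2α_H²γ/(Kk)` whenever `TV(p,q) > γ`. -/
theorem hr_bivariate_parseval
    (ε : ℝ) (hε0 : 0 < ε) (hε1 : ε ≤ 1) (k : ℕ)
    (φ : Fin k → Fin (hrK k)) (hφ : Function.Injective φ) (hφ0 : ∀ x, (φ x).val ≠ 0)
    (p q : Fin k → Fin k → ℝ)
    (hp0 : ∀ x₁ x₂, 0 ≤ p x₁ x₂) (hp1 : ∑ x₁, ∑ x₂, p x₁ x₂ = 1)
    (hq0 : ∀ x₁ x₂, 0 ≤ q x₁ x₂) (hq1 : ∑ x₁, ∑ x₂, q x₁ x₂ = 1)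
    (γ : ℝ) (hγ : 0 < γ) :
    (∑ z₁, ∑ z₂, (hrT ε φ p z₁ z₂ - hrT ε φ q z₁ z₂) ^ 2
        = (alphaH ε) ^ 4 / (hrK k : ℝ) ^ 2 * (∑ x₁, ∑ x₂, (p x₁ x₂ - q x₁ x₂) ^ 2)
          + (alphaH ε) ^ 2 / (hrK k : ℝ) ^ 2 *
              ((∑ x₁, ((∑ x₂, p x₁ x₂) - (∑ x₂, q x₁ x₂)) ^ 2)
                + (∑ x₂, ((∑ x₁, p x₁ x₂) - (∑ x₁, q x₁ x₂)) ^ 2)))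
    ∧ ((1 / 2) * (∑ x₁, ∑ x₂, |p x₁ x₂ - q x₁ x₂|) > γ →
        Real.sqrt (∑ z₁, ∑ z₂, (hrT ε φ p z₁ z₂ - hrT ε φ q z₁ z₂) ^ 2)
          > 2 * (alphaH ε) ^ 2 * γ / ((hrK k : ℝ) * (k : ℝ))) := by
  have hKr : (0:ℝ) < (hrK k : ℝ) := by
    have : 0 < hrK k := Nat.pow_pos (by norm_num)
    exact_mod_cast this
  have hαpos : 0 < alphaH ε := by
    have h1 : 1 < Real.exp ε := Real.one_lt_exp_iff.mpr hε0
    have h2 : (0:ℝ) < Real.exp ε + 1 := by positivity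
    exact div_pos (by linarith) h2
  -- Part 1
  have hTd : ∀ z₁ z₂ : Fin (hrK k), hrT ε φ p z₁ z₂ - hrT ε φ q z₁ z₂
      = ∑ x₁, ∑ x₂, hrW ε φ x₁ z₁ * hrW ε φ x₂ z₂ * (p x₁ x₂ - q x₁ x₂) := by
    intro z₁ z₂
    rw [hrT, hrT, ← Finset.sum_sub_distrib]
    refine Finset.sum_congr rfl fun x₁ _ => ?_
    rw [← Finset.sum_sub_distrib]
    exact Finset.sum_congr rfl fun x₂ _ => by ring
  have h0 : ∑ x₁, ∑ x₂, (p x₁ x₂ - q x₁ x₂) = 0 := by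
    simp only [Finset.sum_sub_distrib]
    rw [hp1, hq1]; ring
  have hrow : ∀ x₁, ∑ x₂, (p x₁ x₂ - q x₁ x₂) = (∑ x₂, p x₁ x₂) - (∑ x₂, q x₁ x₂) :=
    fun _ => Finset.sum_sub_distrib _ _
  have hcol : ∀ x₂, ∑ x₁, (p x₁ x₂ - q x₁ x₂) = (∑ x₁, p x₁ x₂) - (∑ x₁, q x₁ x₂) :=
    fun _ => Finset.sum_sub_distrib _ _
  have part1 : ∑ z₁, ∑ z₂, (hrT ε φ p z₁ z₂ - hrT ε φ q z₁ z₂) ^ 2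
      = (alphaH ε) ^ 4 / (hrK k : ℝ) ^ 2 * (∑ x₁, ∑ x₂, (p x₁ x₂ - q x₁ x₂) ^ 2)
        + (alphaH ε) ^ 2 / (hrK k : ℝ) ^ 2 *
            ((∑ x₁, ((∑ x₂, p x₁ x₂) - (∑ x₂, q x₁ x₂)) ^ 2)
              + (∑ x₂, ((∑ x₁, p x₁ x₂) - (∑ x₁, q x₁ x₂)) ^ 2)) := by
    simp_rw [hTd]
    rw [hr_main ε φ hφ hφ0 (fun a b => p a b - q a b)]
    rw [h0]
    simp_rw [hrow, hcol]
    ring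
  refine ⟨part1, fun hTV => ?_⟩
  -- Part 2
  have hk : 0 < k := by
    rcases Nat.eq_zero_or_pos k with rfl | hk
    · simp at hTV; linarith
    · exact hk
  have hkr : (0:ℝ) < (k:ℝ) := by exact_mod_cast hk
  -- Cauchy–Schwarz
  have hcs : (∑ x₁, ∑ x₂, |p x₁ x₂ - q x₁ x₂|) ^ 2
      ≤ (k:ℝ)^2 * ∑ x₁, ∑ x₂, (p x₁ x₂ - q x₁ x₂) ^ 2 := by
    have := sq_sum_le_card_mul_sum_sq (s := (Finset.univ : Finset (Fin k × Fin k)))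
      (f := fun w => |p w.1 w.2 - q w.1 w.2|)
    simp only [Finset.card_univ, Fintype.card_prod, Fintype.card_fin, sq_abs] at this
    calc (∑ x₁, ∑ x₂, |p x₁ x₂ - q x₁ x₂|) ^ 2
        = (∑ w : Fin k × Fin k, |p w.1 w.2 - q w.1 w.2|) ^ 2 := by
          rw [Fintype.sum_prod_type]
      _ ≤ ((k * k : ℕ) : ℝ) * ∑ w : Fin k × Fin k, (p w.1 w.2 - q w.1 w.2) ^ 2 := by
          exact_mod_cast this
      _ = (k:ℝ)^2 * ∑ x₁, ∑ x₂, (p x₁ x₂ - q x₁ x₂) ^ 2 := by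
          rw [Fintype.sum_prod_type]; push_cast; ring
  have habs : (2:ℝ) * γ < ∑ x₁, ∑ x₂, |p x₁ x₂ - q x₁ x₂| := by linarith
  have habs0 : (0:ℝ) ≤ 2 * γ := by linarith
  have hsq : (2*γ)^2 < (k:ℝ)^2 * ∑ x₁, ∑ x₂, (p x₁ x₂ - q x₁ x₂) ^ 2 :=
    lt_of_lt_of_le (by nlinarith) hcs
  have hd2 : (2*γ)^2 / (k:ℝ)^2 < ∑ x₁, ∑ x₂, (p x₁ x₂ - q x₁ x₂) ^ 2 := by
    rw [div_lt_iff₀ (by positivity)]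
    nlinarith
  -- positivity of the marginal terms
  have hmarg : 0 ≤ (∑ x₁, ((∑ x₂, p x₁ x₂) - (∑ x₂, q x₁ x₂)) ^ 2)
      + (∑ x₂, ((∑ x₁, p x₁ x₂) - (∑ x₁, q x₁ x₂)) ^ 2) := by positivity
  have hE : (2 * (alphaH ε) ^ 2 * γ / ((hrK k : ℝ) * (k : ℝ))) ^ 2
      < ∑ z₁, ∑ z₂, (hrT ε φ p z₁ z₂ - hrT ε φ q z₁ z₂) ^ 2 := by
    rw [part1]
    have key : (2 * (alphaH ε) ^ 2 * γ / ((hrK k : ℝ) * (k : ℝ))) ^ 2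
        = (alphaH ε) ^ 4 / (hrK k : ℝ) ^ 2 * ((2*γ)^2 / (k:ℝ)^2) := by
      field_simp
    have hstep : (alphaH ε) ^ 4 / (hrK k : ℝ) ^ 2 * ((2*γ)^2 / (k:ℝ)^2)
        < (alphaH ε) ^ 4 / (hrK k : ℝ) ^ 2 * (∑ x₁, ∑ x₂, (p x₁ x₂ - q x₁ x₂) ^ 2) := by
      apply mul_lt_mul_of_pos_left hd2 (by positivity)
    have hrest : 0 ≤ (alphaH ε) ^ 2 / (hrK k : ℝ) ^ 2 *
        ((∑ x₁, ((∑ x₂, p x₁ x₂) - (∑ x₂, q x₁ x₂)) ^ 2)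
          + (∑ x₂, ((∑ x₁, p x₁ x₂) - (∑ x₁, q x₁ x₂)) ^ 2)) := by positivity
    rw [key]; linarith
  have hpos : 0 ≤ 2 * (alphaH ε) ^ 2 * γ / ((hrK k : ℝ) * (k : ℝ)) := by positivity
  exact (Real.lt_sqrt hpos).mpr hE
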